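/- For λ > 0 real, let η_λ(a) = (1/sinh(λ/2))·!![cosh(λ/2), −1; −1, cosh(λ/2)] and η_λ(b) = !![e^{λ/2}, 0; 0, e^{−λ/2}]. Then tr(η_λ(a)·η_λ(b)·η_λ(a)⁻¹·η_λ(b)⁻¹) = −2. -/

import Mathlib

open Real Matrix

theorem fuchsian_trace_commutator (l : ℝ) (hl : 0 < l) :
    Matrix.trace
      (((Real.sinh (l / 2))⁻¹ • !![Real.cosh (l / 2), -1; -1, Real.cosh (l / 2)]) *
        !![Real.exp (l / 2), 0; 0, Real.exp (-(l / 2))] *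
        ((Real.sinh (l / 2))⁻¹ • !![Real.cosh (l / 2), -1; -1, Real.cosh (l / 2)])⁻¹ *
        (!![Real.exp (l / 2), 0; 0, Real.exp (-(l / 2))])⁻¹) = -2 := by
  have hs : Real.sinh (l / 2) ≠ 0 := ne_of_gt (Real.sinh_pos_iff.mpr (by linarith))
  have hpyth : Real.cosh (l / 2) ^ 2 - Real.sinh (l / 2) ^ 2 = 1 :=
    Real.cosh_sq_sub_sinh_sq _
  have hexp : Real.exp (l / 2) * Real.exp (-(l / 2)) = 1 := by
    rw [← Real.exp_add]; simp
  have hAinv : ((Real.sinh (l / 2))⁻¹ • !![Real.cosh (l / 2), -1; -1, Real.cosh (l / 2)])⁻¹ =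
      (Real.sinh (l / 2))⁻¹ • !![Real.cosh (l / 2), 1; 1, Real.cosh (l / 2)] := by
    apply Matrix.inv_eq_right_inv
    ext i j
    fin_cases i <;> fin_cases j <;>
      simp [Matrix.mul_apply, Fin.sum_univ_two, Matrix.one_apply] <;>
      field_simp <;> nlinarith [hpyth]
  have hBinv : (!![Real.exp (l / 2), 0; 0, Real.exp (-(l / 2))])⁻¹ =
      !![Real.exp (-(l / 2)), 0; 0, Real.exp (l / 2)] := by
    apply Matrix.inv_eq_right_inv
    ext i j
    fin_cases i <;> fin_cases j <;>
      simp [Matrix.mul_apply, Fin.sum_univ_two, Matrix.one_apply, hexp, mul_comm]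
  rw [hAinv, hBinv]
  simp only [Matrix.trace_fin_two, Matrix.mul_apply, Fin.sum_univ_two, Matrix.smul_apply,
    Matrix.cons_val', Matrix.cons_val_zero, Matrix.cons_val_one, Matrix.head_cons,
    Matrix.head_fin_const, Matrix.empty_val', Matrix.cons_val_fin_one, smul_eq_mul,
    Matrix.of_apply]
  rw [Real.exp_neg]
  have he : Real.exp (l / 2) ≠ 0 := (Real.exp_pos _).ne'
  have hQ : 2 * Real.exp (l / 2) * Real.sinh (l / 2) = Real.exp (l / 2) ^ 2 - 1 := by
    rw [Real.sinh_eq, Real.exp_neg]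
    field_simp
  field_simp
  linear_combination (2 * Real.exp (l / 2) ^ 2) * hpyth +
      (2 * Real.exp (l / 2) * Real.sinh (l / 2) + Real.exp (l / 2) ^ 2 - 1) * hQ
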